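/- For even q = 2^f and d = 2m ≥ 6, the base size of G = Sp_d(q) acting on the right coset space of M = GO^±_d(q) equals d. -/

import Mathlib

namespace SpBaseAux
open scoped Classical

variable {F V : Type*} [Field F] [AddCommGroup V] [Module F V]

lemma char_two_of_card {F : Type*} [Field F] [Fintype F] (f : ℕ)
    (hq : Fintype.card F = 2 ^ f) (hf : 1 ≤ f) : (2 : F) = 0 := by
  haveI := ringChar.charP F
  obtain ⟨n, hp, hcard⟩ := FiniteField.card F (ringChar F)
  have hdvd : ringChar F ∣ 2 ^ f := by
    rw [← hq, hcard]; exact dvd_pow_self _ (by positivity)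
  have h2 : ringChar F = 2 :=
    (Nat.prime_dvd_prime_iff_eq hp Nat.prime_two).mp (hp.dvd_of_dvd_pow hdvd)
  have := CharP.cast_eq_zero F (ringChar F)
  rw [h2] at this
  exact_mod_cast this

section Defs

variable (B : LinearMap.BilinForm F V)

/-- The quadratic form `x ↦ B x w * B x w`. -/
def theta (w : V) : QuadraticForm F V :=
  QuadraticMap.linMulLin (B.flip w) (B.flip w)

@[simp] lemma theta_apply (w x : V) : theta B w x = B x w * B x w := rfl

/-- Transvection-type linear map `x ↦ x + (c * B x v) • v`. -/
def tvL (v : V) (c : F) : V →ₗ[F] V :=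
  LinearMap.id + LinearMap.smulRight (c • B.flip v) v

lemma tvL_apply (v : V) (c : F) (x : V) : tvL B v c x = x + (c * B x v) • v := rfl

/-- Siegel-type linear map `x ↦ x + B x v₁ • v₂ + B x v₂ • v₁`. -/
def sgL (v₁ v₂ : V) : V →ₗ[F] V :=
  LinearMap.id + LinearMap.smulRight (B.flip v₁) v₂ + LinearMap.smulRight (B.flip v₂) v₁

lemma sgL_apply (v₁ v₂ x : V) : sgL B v₁ v₂ x = x + B x v₁ • v₂ + B x v₂ • v₁ := rfl

end Defs

/-- Builds a linear equivalence from an involutive linear map. -/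
def involEquiv (T : V →ₗ[F] V) (h : ∀ x, T (T x) = x) : V ≃ₗ[F] V :=
  { T with invFun := T, left_inv := h, right_inv := h }

@[simp] lemma involEquiv_apply (T : V →ₗ[F] V) (h : ∀ x, T (T x) = x) (x : V) :
    involEquiv T h x = T x := rfl

@[simp] lemma involEquiv_symm_apply (T : V →ₗ[F] V) (h : ∀ x, T (T x) = x) (x : V) :
    (involEquiv T h).symm x = T x := rfl

section CharTwo

variable (h2 : (2 : F) = 0)
include h2

lemma addself (a : F) : a + a = 0 := by rw [← two_mul, h2, zero_mul]

lemma addselfV (x : V) : x + x = 0 := by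
  rw [← two_smul F x, h2, zero_smul]

lemma sq_inj : Function.Injective (fun a : F => a * a) := by
  intro a b hab
  simp only at hab
  have h : (a + b) * (a + b) = 0 := by
    have : (a + b) * (a + b) = a * a + b * b + (a * b + a * b) := by ring
    rw [this, addself h2 (a * b), add_zero, hab, addself h2]
  have hab0 := mul_self_eq_zero.mp h
  have : a = -b := by linear_combination hab0
  rw [this, neg_eq_iff_add_eq_zero, addself h2]

lemma sq_surj [Fintype F] : Function.Surjective (fun a : F => a * a) :=
  Finite.surjective_of_injective (sq_inj h2)

end CharTwo


section AS

variable [Fintype F] (h2 : (2 : F) = 0)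

/-- The image of the Artin-Schreier map `t ↦ t*t + t`. -/
noncomputable def ASset (F : Type*) [Field F] [Fintype F] : Finset F := by
  classical exact (Finset.univ : Finset F).image (fun t => t * t + t)

lemma mem_ASset {a : F} : a ∈ ASset F ↔ ∃ t : F, t * t + t = a := by
  simp [ASset, eq_comm]

include h2

lemma ASset_add {a b : F} (ha : a ∈ ASset F) (hb : b ∈ ASset F) : a + b ∈ ASset F := by
  rw [mem_ASset] at ha hb ⊢
  obtain ⟨s, hs⟩ := ha
  obtain ⟨t, ht⟩ := hb
  refine ⟨s + t, ?_⟩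
  have : (s + t) * (s + t) + (s + t) = (s * s + s) + (t * t + t) + (s * t + s * t) := by ring
  rw [this, addself h2, add_zero, hs, ht]

lemma ASset_card_le : Fintype.card F ≤ 2 * (ASset F).card := by
  classical
  have : ASset F = (Finset.univ : Finset F).image (fun t => t * t + t) := by
    simp [ASset]
  rw [this]
  have h := Finset.card_le_mul_card_image (f := fun t : F => t * t + t) Finset.univ 2 ?_
  · simpa using h
  intro a _
  rcases Finset.eq_empty_or_nonempty (Finset.univ.filter fun x => x * x + x = a) with he | ⟨t0, ht0⟩
  · simp [he]
  · have hsub : (Finset.univ.filter fun x => x * x + x = a) ⊆ {t0, t0 + 1} := by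
      intro t ht
      simp only [Finset.mem_filter] at ht ht0
      have : (t + t0) * (t + t0 + 1) = 0 := by
        have expand : (t + t0) * (t + t0 + 1) =
            (t * t + t) + (t0 * t0 + t0) + (t * t0 + t * t0) := by ring
        rw [expand, addself h2, add_zero, ht.2, ht0.2, addself h2]
      rcases mul_eq_zero.mp this with h' | h'
      · simp only [Finset.mem_insert, Finset.mem_singleton]
        left
        have ht0' : t0 + t0 = 0 := addself h2 t0
        linear_combination h' - ht0'
      · simp only [Finset.mem_insert, Finset.mem_singleton]
        right
        have ht0' : t0 + t0 = 0 := addself h2 t0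
        linear_combination h' - ht0' - h2
    calc (Finset.univ.filter fun x => x * x + x = a).card ≤ ({t0, t0+1} : Finset F).card :=
          Finset.card_le_card hsub
      _ ≤ 2 := Finset.card_insert_le _ _ |>.trans (by simp)

lemma ASset_ne_univ : ASset F ≠ Finset.univ := by
  intro h
  have hsurj : Function.Surjective (fun t : F => t * t + t) := by
    intro a
    have ha : a ∈ ASset F := h ▸ Finset.mem_univ a
    exact mem_ASset.mp ha
  have hinj := Finite.injective_iff_surjective.mpr hsurj
  have h01 : (0 : F) = 1 := by
    apply hinj
    show (0 : F) * 0 + 0 = 1 * 1 + 1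
    rw [one_mul]
    rw [addself h2 1]
    ring
  exact one_ne_zero h01.symm

lemma ASset_add_of_not_mem {a b : F} (ha : a ∉ ASset F) (hb : b ∉ ASset F) :
    a + b ∈ ASset F := by
  classical
  set T := ASset F with hT
  have hsub : T.image (fun t => a + t) ⊆ Tᶜ := by
    intro x hx
    obtain ⟨t, ht, rfl⟩ := Finset.mem_image.mp hx
    rw [Finset.mem_compl]
    intro hat
    apply ha
    have : (a + t) + t = a := by
      rw [add_assoc, addself h2, add_zero]
    exact this ▸ ASset_add h2 hat ht
  have hcardim : (T.image (fun t => a + t)).card = T.card :=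
    Finset.card_image_of_injective _ (add_right_injective a)
  have hcompl : Tᶜ.card = Fintype.card F - T.card := by
    rw [Finset.card_compl]
  have hle := ASset_card_le h2 (F := F)
  rw [← hT] at hle
  have : Tᶜ.card ≤ (T.image (fun t => a + t)).card := by omega
  have heq : T.image (fun t => a + t) = Tᶜ := Finset.eq_of_subset_of_card_le hsub this
  have hbmem : b ∈ T.image (fun t => a + t) := by
    rw [heq, Finset.mem_compl]; exact hb
  obtain ⟨t, ht, hbt⟩ := Finset.mem_image.mp hbmem
  have : a + b = t := by
    rw [← hbt, ← add_assoc, addself h2, zero_add]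
  rw [hT] at ht ⊢
  exact this ▸ ht

end AS


section Forms

variable {B : LinearMap.BilinForm F V}

lemma bsymm (h2 : (2 : F) = 0) (halt : ∀ x : V, B x x = 0) (x y : V) : B x y = B y x := by
  have h0 : B (x + y) (x + y) = 0 := halt (x + y)
  have hexp : B x y + B y x = 0 := by
    have : B (x + y) (x + y) = B x x + B x y + B y x + B y y := by
      simp only [map_add, LinearMap.add_apply]; ring
    rw [this, halt x, halt y] at h0
    linear_combination h0
  linear_combination hexp - B y x * h2

lemma polB_of_polarBilin {Q : QuadraticForm F V} (hpol : QuadraticMap.polarBilin Q = B) :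
    ∀ x y : V, Q (x + y) = Q x + Q y + B x y := by
  intro x y
  have h : QuadraticMap.polar Q x y = B x y := by
    rw [← QuadraticMap.polarBilin_apply_apply, hpol]
  rw [QuadraticMap.polar] at h
  linear_combination h

lemma theta_add (h2 : (2 : F) = 0) (w w' : V) :
    theta B (w + w') = theta B w + theta B w' := by
  apply QuadraticMap.ext
  intro x
  simp only [theta_apply, map_add, QuadraticMap.add_apply]
  linear_combination (B x w * B x w') * h2

lemma theta_zero : theta B (0 : V) = 0 := by
  apply QuadraticMap.ext
  intro x
  simp [theta_apply]

lemma theta_inj [Fintype F] (h2 : (2 : F) = 0) (halt : ∀ x : V, B x x = 0)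
    (hnd : ∀ x : V, (∀ y : V, B x y = 0) → x = 0) {w w' : V}
    (h : theta B w = theta B w') : w = w' := by
  have hval : ∀ x, B x w = B x w' := by
    intro x
    have := QuadraticMap.congr_fun h x
    simp only [theta_apply] at this
    exact sq_inj h2 this
  have : w - w' = 0 := by
    apply hnd
    intro y
    rw [map_sub, LinearMap.sub_apply, bsymm h2 halt w y, bsymm h2 halt w' y, hval y, sub_self]
  exact sub_eq_zero.mp this

lemma theta_comp (g : V ≃ₗ[F] V) (hg : ∀ x y : V, B (g x) (g y) = B x y) (w : V) :
    (theta B w).comp g.toLinearMap = theta B (g.symm w) := by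
  apply QuadraticMap.ext
  intro x
  simp only [QuadraticMap.comp_apply, theta_apply, LinearEquiv.coe_coe]
  have hb : B (g x) w = B x (g.symm w) := by
    conv_lhs => rw [← LinearEquiv.apply_symm_apply g w]
    exact hg x (g.symm w)
  rw [hb]


lemma tvL_invol (h2 : (2 : F) = 0) (halt : ∀ x : V, B x x = 0) (v : V) (c : F) :
    ∀ x, tvL B v c (tvL B v c x) = x := by
  intro x
  rw [tvL_apply, tvL_apply]
  have hb : B (x + (c * B x v) • v) v = B x v := by
    simp [map_add, map_smul, halt, smul_eq_mul, LinearMap.add_apply]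
  rw [hb]
  have : x + (c * B x v) • v + (c * B x v) • v
      = x + ((c * B x v) + (c * B x v)) • v := by module
  rw [this, addself h2, zero_smul, add_zero]

lemma tvL_symp (h2 : (2 : F) = 0) (halt : ∀ x : V, B x x = 0) (v : V) (c : F) :
    ∀ x y, B (tvL B v c x) (tvL B v c y) = B x y := by
  intro x y
  rw [tvL_apply, tvL_apply]
  simp only [map_add, map_smul, LinearMap.add_apply, LinearMap.smul_apply, smul_eq_mul]
  rw [halt v, bsymm h2 halt v y]
  linear_combination (c * B x v * B y v) * h2

lemma tvL_comp (h2 : (2 : F) = 0) {Q' : QuadraticForm F V}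
    (hQ' : ∀ x y : V, Q' (x + y) = Q' x + Q' y + B x y) (v : V) (c : F) :
    Q'.comp (tvL B v c) = Q' + (c * c * Q' v + c) • theta B v := by
  apply QuadraticMap.ext
  intro x
  rw [QuadraticMap.comp_apply, tvL_apply, hQ', QuadraticMap.add_apply,
    QuadraticMap.smul_apply, theta_apply, QuadraticMap.map_smul]
  simp only [map_smul, smul_eq_mul]
  ring

lemma sgL_invol (h2 : (2 : F) = 0) (halt : ∀ x : V, B x x = 0) (v1 v2 : V)
    (h12 : B v1 v2 = 0) : ∀ x, sgL B v1 v2 (sgL B v1 v2 x) = x := by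
  intro x
  rw [sgL_apply, sgL_apply]
  have h21 : B v2 v1 = 0 := by rw [bsymm h2 halt]; exact h12
  have hb1 : B (x + B x v1 • v2 + B x v2 • v1) v1 = B x v1 := by
    simp [map_add, map_smul, halt, smul_eq_mul, LinearMap.add_apply, h21]
  have hb2 : B (x + B x v1 • v2 + B x v2 • v1) v2 = B x v2 := by
    simp [map_add, map_smul, halt, smul_eq_mul, LinearMap.add_apply, h12]
  rw [hb1, hb2]
  have : x + B x v1 • v2 + B x v2 • v1 + B x v1 • v2 + B x v2 • v1
      = x + (B x v1 + B x v1) • v2 + (B x v2 + B x v2) • v1 := by module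
  rw [this, addself h2, addself h2, zero_smul, zero_smul, add_zero, add_zero]

lemma sgL_symp (h2 : (2 : F) = 0) (halt : ∀ x : V, B x x = 0) (v1 v2 : V)
    (h12 : B v1 v2 = 0) : ∀ x y, B (sgL B v1 v2 x) (sgL B v1 v2 y) = B x y := by
  intro x y
  rw [sgL_apply, sgL_apply]
  have h21 : B v2 v1 = 0 := by rw [bsymm h2 halt]; exact h12
  simp only [map_add, map_smul, LinearMap.add_apply, LinearMap.smul_apply, smul_eq_mul]
  rw [halt v1, halt v2, h12, h21, bsymm h2 halt v1 y, bsymm h2 halt v2 y]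
  linear_combination (B x v1 * B y v2 + B x v2 * B y v1) * h2

lemma sgL_fix (h2 : (2 : F) = 0) (halt : ∀ x : V, B x x = 0) {Q' : QuadraticForm F V}
    (hQ' : ∀ x y : V, Q' (x + y) = Q' x + Q' y + B x y) (v1 v2 : V)
    (hv1 : Q' v1 = 0) (hv2 : Q' v2 = 0) (h12 : B v1 v2 = 0) :
    Q'.comp (sgL B v1 v2) = Q' := by
  apply QuadraticMap.ext
  intro x
  rw [QuadraticMap.comp_apply, sgL_apply, add_assoc, hQ', hQ' (B x v1 • v2) (B x v2 • v1)]
  rw [QuadraticMap.map_smul, QuadraticMap.map_smul]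
  have h21 : B v2 v1 = 0 := by rw [bsymm h2 halt]; exact h12
  simp only [map_add, map_smul, LinearMap.add_apply, LinearMap.smul_apply, smul_eq_mul,
    hv1, hv2, h21]
  linear_combination (B x v1 * B x v2) * h2

end Forms


section Dual

variable {B : LinearMap.BilinForm F V}

lemma exists_dual_vec [FiniteDimensional F V] (h2 : (2 : F) = 0)
    (halt : ∀ x : V, B x x = 0) (hnd : ∀ x : V, (∀ y : V, B x y = 0) → x = 0)
    (φ : V →ₗ[F] F) : ∃ w : V, ∀ x, B x w = φ x := by
  have hinj : Function.Injective (B.flip : V →ₗ[F] Module.Dual F V) := by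
    rw [← LinearMap.ker_eq_bot]
    rw [LinearMap.ker_eq_bot']
    intro w hw
    apply hnd
    intro y
    rw [bsymm h2 halt]
    have := LinearMap.congr_fun hw y
    simpa using this
  have hsurj := (LinearMap.injective_iff_surjective_of_finrank_eq_finrank
    (Subspace.dual_finrank_eq (K := F) (V := V)).symm).mp hinj
  obtain ⟨w, hw⟩ := hsurj φ
  exact ⟨w, fun x => by rw [← hw]; rfl⟩

lemma functional_factor (φ ψ : V →ₗ[F] F) (u : V) (hu : φ u ≠ 0)
    (h : ∀ x, φ x = 0 → ψ x = 0) : ∃ c : F, ∀ x, ψ x = c * φ x := by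
  refine ⟨ψ u / φ u, fun x => ?_⟩
  have hk : φ (x - (φ x / φ u) • u) = 0 := by
    rw [map_sub, map_smul, smul_eq_mul]
    field_simp
    ring
  have h0 := h _ hk
  rw [map_sub, map_smul, smul_eq_mul, sub_eq_zero] at h0
  rw [h0]
  field_simp

lemma finrank_ker_ge [FiniteDimensional F V] {ι : Type*} [Fintype ι]
    (Φ : V →ₗ[F] (ι → F)) :
    Module.finrank F V ≤ Module.finrank F (LinearMap.ker Φ) + Fintype.card ι := by
  have h1 := LinearMap.finrank_range_add_finrank_ker Φ
  have h2 : Module.finrank F (LinearMap.range Φ) ≤ Fintype.card ι := by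
    have := Submodule.finrank_le (LinearMap.range Φ)
    rwa [Module.finrank_pi] at this
  omega

lemma finrank_ker_functional [FiniteDimensional F V] (φ : V →ₗ[F] F) (u : V)
    (hu : φ u ≠ 0) :
    Module.finrank F (LinearMap.ker φ) + 1 = Module.finrank F V := by
  have h1 := LinearMap.finrank_range_add_finrank_ker φ
  have hsurj : Function.Surjective φ := by
    intro c
    exact ⟨(c / φ u) • u, by rw [map_smul, smul_eq_mul]; field_simp⟩
  have h2 : LinearMap.range φ = ⊤ := LinearMap.range_eq_top.mpr hsurj
  rw [h2, finrank_top, Module.finrank_self] at h1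
  omega

lemma exists_indep_pair [FiniteDimensional F V] (W : Submodule F V)
    (h : 2 ≤ Module.finrank F W) :
    ∃ v1 v2 : V, v1 ∈ W ∧ v2 ∈ W ∧ v1 ≠ 0 ∧ ∀ a : F, v2 + a • v1 ≠ 0 := by
  have b := Module.finBasis F W
  have h0 : (0 : ℕ) < Module.finrank F W := by omega
  have h1 : (1 : ℕ) < Module.finrank F W := by omega
  set i0 : Fin (Module.finrank F W) := ⟨0, h0⟩
  set i1 : Fin (Module.finrank F W) := ⟨1, h1⟩
  refine ⟨(b i0 : V), (b i1 : V), (b i0).2, (b i1).2, ?_, ?_⟩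
  · intro hz
    exact b.ne_zero i0 (Subtype.ext hz)
  · intro a hz
    have hzW : (b i1 + a • b i0 : W) = 0 := by
      apply Subtype.ext
      push_cast
      exact hz
    have heq : (b i1 : W) = (-a) • b i0 := by
      rw [neg_smul]
      rw [← sub_eq_zero]
      rw [sub_neg_eq_add]
      exact hzW
    have hc := congrArg (fun w => b.repr w i1) heq
    have hne : i0 ≠ i1 := by
      intro hii
      have : (0 : ℕ) = 1 := congrArg Fin.val hii
      omega
    simp [Module.Basis.repr_self, Finsupp.single_apply, hne] at hc

end Dual


section Classification

variable {B : LinearMap.BilinForm F V}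

lemma exists_theta_rep [Fintype F] [FiniteDimensional F V] (h2 : (2 : F) = 0)
    (halt : ∀ x : V, B x x = 0) (hnd : ∀ x : V, (∀ y : V, B x y = 0) → x = 0)
    {Q' : QuadraticForm F V} (hQ' : ∀ x y : V, Q' (x + y) = Q' x + Q' y + B x y)
    (g : V →ₗ[F] V) (hg : ∀ x y : V, B (g x) (g y) = B x y) :
    ∃ w : V, Q'.comp g = Q' + theta B w := by
  classical
  set sqrt : F → F := Function.surjInv (sq_surj h2) with hsqrt
  have hsq : ∀ a : F, sqrt a * sqrt a = a := fun a => Function.surjInv_eq (sq_surj h2) a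
  have hsqadd : ∀ a b : F, sqrt (a + b) = sqrt a + sqrt b := by
    intro a b
    apply sq_inj h2
    show sqrt (a+b) * sqrt (a+b) = (sqrt a + sqrt b) * (sqrt a + sqrt b)
    rw [hsq]
    have : (sqrt a + sqrt b) * (sqrt a + sqrt b)
        = sqrt a * sqrt a + sqrt b * sqrt b + (sqrt a * sqrt b + sqrt a * sqrt b) := by ring
    rw [this, addself h2, add_zero, hsq, hsq]
  have hsqmul : ∀ c a : F, sqrt (c * c * a) = c * sqrt a := by
    intro c a
    apply sq_inj h2
    show sqrt (c*c*a) * sqrt (c*c*a) = (c * sqrt a) * (c * sqrt a)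
    rw [hsq]
    have : (c * sqrt a) * (c * sqrt a) = c * c * (sqrt a * sqrt a) := by ring
    rw [this, hsq]
  set L : V →ₗ[F] F :=
    { toFun := fun x => sqrt (Q' (g x) + Q' x)
      map_add' := by
        intro x y
        show sqrt (Q' (g (x + y)) + Q' (x + y))
            = sqrt (Q' (g x) + Q' x) + sqrt (Q' (g y) + Q' y)
        have hD : Q' (g (x + y)) + Q' (x + y)
            = (Q' (g x) + Q' x) + (Q' (g y) + Q' y) + (B x y + B x y) := by
          rw [map_add, hQ' (g x) (g y), hQ' x y, hg]
          ring
        rw [hD, addself h2, add_zero, hsqadd]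
      map_smul' := by
        intro c x
        show sqrt (Q' (g (c • x)) + Q' (c • x)) = c * sqrt (Q' (g x) + Q' x)
        have hD : Q' (g (c • x)) + Q' (c • x) = c * c * (Q' (g x) + Q' x) := by
          rw [map_smul, QuadraticMap.map_smul, QuadraticMap.map_smul, smul_eq_mul,
            smul_eq_mul]
          ring
        rw [hD, hsqmul] } with hL
  obtain ⟨w, hw⟩ := exists_dual_vec h2 halt hnd L
  refine ⟨w, ?_⟩
  apply QuadraticMap.ext
  intro x
  rw [QuadraticMap.comp_apply, QuadraticMap.add_apply, theta_apply, hw]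
  have hLx : L x = sqrt (Q' (g x) + Q' x) := rfl
  rw [hLx, hsq]
  have := addself h2 (Q' x)
  linear_combination -this

lemma fix_perp_transvection [FiniteDimensional F V] (h2 : (2 : F) = 0)
    (halt : ∀ x : V, B x x = 0) (hnd : ∀ x : V, (∀ y : V, B x y = 0) → x = 0)
    (v : V) (hv : v ≠ 0) (g : V ≃ₗ[F] V)
    (hg : ∀ x y : V, B (g x) (g y) = B x y)
    (hfix : ∀ x : V, B x v = 0 → g x = x) :
    ∃ c : F, ∀ y, g y = y + (c * B y v) • v := by
  obtain ⟨u, hu⟩ : ∃ u, B u v ≠ 0 := by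
    by_contra hcon
    push_neg at hcon
    exact hv (hnd v (fun y => by rw [bsymm h2 halt]; exact hcon y))
  have key : ∀ y x : V, B x v = 0 → B (g y + y) x = 0 := by
    intro y x hx
    have h1 : B x (g y) = B x y := by
      conv_lhs => rw [← hfix x hx]
      exact hg x y
    rw [map_add, LinearMap.add_apply]
    rw [bsymm h2 halt (g y) x, h1, bsymm h2 halt y x]
    exact addself h2 _
  set ψ : V →ₗ[F] F :=
    (B u v)⁻¹ • ((B u).comp (g.toLinearMap + LinearMap.id)) with hψ
  have hψval : ∀ y, ψ y = (B u v)⁻¹ * B u (g y + y) := by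
    intro y
    simp [hψ, LinearMap.smul_apply, LinearMap.comp_apply, LinearMap.add_apply,
      smul_eq_mul, map_add]
  have hy : ∀ y, g y + y = ψ y • v := by
    intro y
    obtain ⟨cy, hcy⟩ := functional_factor (B.flip v) (B (g y + y)) u hu
      (fun x hx => key y x hx)
    have hval : ∀ t, B (g y + y) t = cy * B t v := by
      intro t; rw [hcy t]; rfl
    have heq : g y + y - cy • v = 0 := by
      apply hnd
      intro t
      rw [map_sub, LinearMap.sub_apply, map_smul, LinearMap.smul_apply, smul_eq_mul]
      rw [hval t, bsymm h2 halt v t]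
      ring
    have heq2 : g y + y = cy • v := sub_eq_zero.mp heq
    have hcyψ : cy = ψ y := by
      rw [hψval y, heq2, map_smul, smul_eq_mul]
      field_simp
    rw [← hcyψ]
    exact heq2
  have hvanish : ∀ x : V, (B.flip v) x = 0 → ψ x = 0 := by
    intro x hx
    replace hx : B x v = 0 := hx
    have hgx : g x = x := hfix x hx
    have := hy x
    rw [hgx] at this
    have h0 : ψ x • v = 0 := by rw [← this]; exact addselfV h2 x
    rcases smul_eq_zero.mp h0 with h' | h'
    · exact h'
    · exact absurd h' hv
  obtain ⟨c, hc⟩ := functional_factor (B.flip v) ψ u hu hvanish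
  refine ⟨c, fun y => ?_⟩
  have h1 := hy y
  have h2' : g y = y + ψ y • v := by
    have h3 : g y + (y + y) = ψ y • v + y := by
      rw [← add_assoc, h1]
    rw [addselfV h2 y, add_zero] at h3
    rw [h3, add_comm]
  rw [h2', hc y]
  rfl

end Classification


section Singular

variable {B : LinearMap.BilinForm F V}

lemma mem_ker_prod {φ1 φ2 : V →ₗ[F] F} {x : V} :
    x ∈ LinearMap.ker (φ1.prod φ2) ↔ φ1 x = 0 ∧ φ2 x = 0 := by
  simp [LinearMap.mem_ker, LinearMap.prod_apply, Prod.ext_iff]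

lemma finrank_ker_prod_ge [FiniteDimensional F V] (φ1 φ2 : V →ₗ[F] F) :
    Module.finrank F V ≤ Module.finrank F (LinearMap.ker (φ1.prod φ2)) + 2 := by
  have h1 := LinearMap.finrank_range_add_finrank_ker (φ1.prod φ2)
  have h2 : Module.finrank F (LinearMap.range (φ1.prod φ2)) ≤ 2 := by
    have h3 := Submodule.finrank_le (LinearMap.range (φ1.prod φ2))
    have h4 : Module.finrank F (F × F) = 2 := by
      rw [Module.finrank_prod, Module.finrank_self]
    omega
  omega

/-- Existence of a nonzero singular vector for a nondegenerate quadratic form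
in dimension at least 4 over a finite field of characteristic 2. -/
lemma exists_singular [Fintype F] [FiniteDimensional F V] (h2 : (2 : F) = 0)
    (halt : ∀ x : V, B x x = 0) (hnd : ∀ x : V, (∀ y : V, B x y = 0) → x = 0)
    {Q' : QuadraticForm F V} (hQ' : ∀ x y : V, Q' (x + y) = Q' x + Q' y + B x y)
    (hdim : 4 ≤ Module.finrank F V) :
    ∃ v : V, v ≠ 0 ∧ Q' v = 0 := by
  classical
  -- pick x ≠ 0
  haveI : Nontrivial V := Module.nontrivial_of_finrank_pos (R := F) (by omega)
  obtain ⟨x, hx⟩ := exists_ne (0 : V)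
  obtain ⟨y', hy'⟩ : ∃ y', B x y' ≠ 0 := by
    by_contra hcon
    push_neg at hcon
    exact hx (hnd x hcon)
  set y : V := (B x y')⁻¹ • y' with hy
  have hxy : B x y = 1 := by
    rw [hy, map_smul, smul_eq_mul]
    field_simp
  clear_value y
  by_cases hQx : Q' x = 0
  · exact ⟨x, hx, hQx⟩
  by_cases hQy : Q' y = 0
  · refine ⟨y, ?_, hQy⟩
    intro h0
    rw [h0, map_zero] at hxy
    exact one_ne_zero hxy.symm
  -- the perp of x,y
  set W : Submodule F V := LinearMap.ker ((B x).prod (B y)) with hW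
  have hmemW : ∀ z : V, z ∈ W ↔ B x z = 0 ∧ B y z = 0 := fun z => mem_ker_prod
  have hWrank : 2 ≤ Module.finrank F W := by
    have h5 := finrank_ker_prod_ge (B x) (B y)
    rw [← hW] at h5
    omega
  -- nondegeneracy of B on W
  have hWnd : ∀ z ∈ W, (∀ t ∈ W, B z t = 0) → z = 0 := by
    intro z hz hzt
    apply hnd
    intro w
    set w' : V := w + B w y • x + B w x • y with hw'
    have hw'W : w' ∈ W := by
      rw [hmemW]
      constructor
      · rw [hw']
        simp only [map_add, map_smul, smul_eq_mul, LinearMap.add_apply, LinearMap.smul_apply]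
        rw [halt x, hxy, bsymm h2 halt x w]
        linear_combination (B w x) * h2
      · rw [hw']
        simp only [map_add, map_smul, smul_eq_mul, LinearMap.add_apply, LinearMap.smul_apply]
        rw [halt y, bsymm h2 halt y x, hxy, bsymm h2 halt y w]
        linear_combination (B w y) * h2
    have hzx : B z x = 0 := by
      rw [bsymm h2 halt z x]
      exact ((hmemW z).mp hz).1
    have hzy : B z y = 0 := by
      rw [bsymm h2 halt z y]
      exact ((hmemW z).mp hz).2
    have hzw' : B z w' = 0 := hzt w' hw'W
    rw [hw'] at hzw'
    simp only [map_add, map_smul, smul_eq_mul, hzx, hzy, mul_zero, add_zero] at hzw'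
    exact hzw'
  -- pick z1 z2 in W with B z1 z2 ≠ 0
  haveI : Nontrivial W := Module.nontrivial_of_finrank_pos (R := F) (by omega)
  obtain ⟨z1', hz1'⟩ := exists_ne (0 : W)
  set z1 : V := (z1' : V) with hz1def
  have hz1W : z1 ∈ W := z1'.2
  have hz1 : z1 ≠ 0 := fun h0 => hz1' (Subtype.ext h0)
  obtain ⟨z2, hz2W, hz12⟩ : ∃ z2 ∈ W, B z1 z2 ≠ 0 := by
    by_contra hcon
    push_neg at hcon
    exact hz1 (hWnd z1 hz1W hcon)
  -- main Artin-Schreier argument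
  by_cases hAS : ∃ z ∈ W, ∃ t : F, t * t * (Q' y + Q' z) + t + Q' x = 0
  · obtain ⟨z, hzW, t, ht⟩ := hAS
    obtain ⟨hxz, hyz⟩ := (hmemW z).mp hzW
    refine ⟨x + t • (y + z), ?_, ?_⟩
    · intro h0
      have hb := congrArg (fun w => B w y) h0
      simp only [map_add, map_smul, smul_eq_mul, LinearMap.add_apply, LinearMap.smul_apply,
        LinearMap.zero_apply, map_zero, LinearMap.map_zero] at hb
      rw [hxy, halt y, bsymm h2 halt z y, hyz] at hb
      simp at hb
    · rw [hQ' x (t • (y + z)), QuadraticMap.map_smul, smul_eq_mul, hQ' y z, hyz,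
        map_smul, smul_eq_mul, map_add, hxy, hxz]
      linear_combination ht
  · exfalso
    push_neg at hAS
    -- every coefficient is nonzero
    have hc0 : ∀ z ∈ W, Q' y + Q' z ≠ 0 := by
      intro z hz hzero
      have := hAS z hz (Q' x)
      rw [hzero, mul_zero, zero_add, addself h2] at this
      exact this rfl
    have hconst : ∀ z ∈ W, (Q' y + Q' z) * Q' x ∉ ASset F := by
      intro z hz hmem
      obtain ⟨sr, hsr⟩ := mem_ASset.mp hmem
      have hcne : Q' y + Q' z ≠ 0 := hc0 z hz
      apply hAS z hz (sr / (Q' y + Q' z))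
      have hrw : sr / (Q' y + Q' z) * (sr / (Q' y + Q' z)) * (Q' y + Q' z)
          + sr / (Q' y + Q' z) + Q' x
          = (sr * sr + sr + (Q' y + Q' z) * Q' x) / (Q' y + Q' z) := by
        field_simp
      rw [hrw]
      have hstep : sr * sr + sr + (Q' y + Q' z) * Q' x = 0 := by
        linear_combination hsr + ((Q' y + Q' z) * Q' x) * h2
      rw [hstep, zero_div]
    -- B z w * Q' x ∈ ASset for all z w in W
    have hBin : ∀ za ∈ W, ∀ zb ∈ W, B za zb * Q' x ∈ ASset F := by
      intro za hza zb hzb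
      have h1 := hconst za hza
      have h2' := hconst zb hzb
      have h3 := hconst (za + zb) (W.add_mem hza hzb)
      have h4 := hconst 0 W.zero_mem
      have e1 := ASset_add_of_not_mem h2 h1 h2'
      have e2 := ASset_add_of_not_mem h2 h3 h4
      have e3 := ASset_add h2 e1 e2
      have heq : (Q' y + Q' za) * Q' x + (Q' y + Q' zb) * Q' x
          + ((Q' y + Q' (za + zb)) * Q' x + (Q' y + Q' 0) * Q' x)
          = B za zb * Q' x := by
        rw [hQ' za zb, QuadraticMap.map_zero]
        linear_combination (Q' x * (2 * Q' y + Q' za + Q' zb)) * h2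
      rw [heq] at e3
      exact e3
    -- scale to get everything in ASset
    have hall : ∀ γ : F, γ ∈ ASset F := by
      intro γ
      have hne : B z1 z2 * Q' x ≠ 0 := mul_ne_zero hz12 hQx
      have := hBin z1 hz1W ((γ * (B z1 z2 * Q' x)⁻¹) • z2) (W.smul_mem _ hz2W)
      rw [map_smul, smul_eq_mul] at this
      have hscal : γ * (B z1 z2 * Q' x)⁻¹ * B z1 z2 * Q' x = γ := by
        field_simp
      rwa [hscal] at this
    have : ASset F = Finset.univ := Finset.eq_univ_iff_forall.mpr hall
    exact ASset_ne_univ h2 this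

end Singular


section Assemble

variable {B : LinearMap.BilinForm F V}

lemma comp_refl (Q' : QuadraticForm F V) :
    Q'.comp (LinearEquiv.refl F V).toLinearMap = Q' :=
  QuadraticMap.ext fun _ => rfl

lemma comp_add' (Q1 Q2 : QuadraticForm F V) (f : V →ₗ[F] V) :
    (Q1 + Q2).comp f = Q1.comp f + Q2.comp f :=
  QuadraticMap.ext fun x => by
    simp [QuadraticMap.comp_apply, QuadraticMap.add_apply]

lemma perp_pair_nondeg (h2 : (2 : F) = 0) (halt : ∀ x : V, B x x = 0)
    (hnd : ∀ x : V, (∀ y : V, B x y = 0) → x = 0) (e f : V) (hef : B e f = 1) :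
    ∀ z ∈ LinearMap.ker ((B e).prod (B f)), (∀ t ∈ LinearMap.ker ((B e).prod (B f)),
      B z t = 0) → z = 0 := by
  intro z hz hzt
  have hze : B e z = 0 := (mem_ker_prod.mp hz).1
  have hzf : B f z = 0 := (mem_ker_prod.mp hz).2
  apply hnd
  intro w
  set w' : V := w + B w f • e + B w e • f with hw'
  have hw'W : w' ∈ LinearMap.ker ((B e).prod (B f)) := by
    rw [mem_ker_prod]
    constructor
    · rw [hw']
      simp only [map_add, map_smul, smul_eq_mul, LinearMap.add_apply, LinearMap.smul_apply]
      rw [halt e, hef, bsymm h2 halt e w]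
      linear_combination (B w e) * h2
    · rw [hw']
      simp only [map_add, map_smul, smul_eq_mul, LinearMap.add_apply, LinearMap.smul_apply]
      rw [halt f, bsymm h2 halt f e, hef, bsymm h2 halt f w]
      linear_combination (B w f) * h2
  have hzx : B z e = 0 := by rw [bsymm h2 halt z e]; exact hze
  have hzy : B z f = 0 := by rw [bsymm h2 halt z f]; exact hzf
  have hzw' : B z w' = 0 := hzt w' hw'W
  rw [hw'] at hzw'
  simp only [map_add, map_smul, smul_eq_mul, hzx, hzy, mul_zero, add_zero] at hzw'
  exact hzw'

lemma exists_singular_sub [Fintype F] [FiniteDimensional F V] (h2 : (2 : F) = 0)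
    (halt : ∀ x : V, B x x = 0)
    {Q' : QuadraticForm F V} (hQ' : ∀ x y : V, Q' (x + y) = Q' x + Q' y + B x y)
    (U : Submodule F V) (hUnd : ∀ z ∈ U, (∀ t ∈ U, B z t = 0) → z = 0)
    (hUdim : 4 ≤ Module.finrank F U) :
    ∃ v, v ∈ U ∧ v ≠ 0 ∧ Q' v = 0 := by
  set B' : LinearMap.BilinForm F U := B.restrict U with hB'
  set Q'' : QuadraticForm F U := Q'.comp U.subtype with hQ''
  have halt' : ∀ x : U, B' x x = 0 := fun x => halt (x : V)
  have hnd' : ∀ x : U, (∀ y : U, B' x y = 0) → x = 0 := by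
    intro x hx
    have : (x : V) = 0 := hUnd (x : V) x.2 (fun t ht => hx ⟨t, ht⟩)
    exact Subtype.ext this
  have hpol' : ∀ x y : U, Q'' (x + y) = Q'' x + Q'' y + B' x y := by
    intro x y
    show Q' ((x : V) + (y : V)) = Q' (x : V) + Q' (y : V) + B (x : V) (y : V)
    exact hQ' _ _
  obtain ⟨v, hv0, hQv⟩ := exists_singular h2 halt' hnd' hpol' hUdim
  exact ⟨(v : V), v.2, fun h => hv0 (Subtype.ext h), hQv⟩

lemma exists_hyperbolic [Fintype F] [FiniteDimensional F V] (h2 : (2 : F) = 0)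
    (halt : ∀ x : V, B x x = 0) (hnd : ∀ x : V, (∀ y : V, B x y = 0) → x = 0)
    {Q' : QuadraticForm F V} (hQ' : ∀ x y : V, Q' (x + y) = Q' x + Q' y + B x y)
    (hdim : 4 ≤ Module.finrank F V) :
    ∃ e f : V, Q' e = 0 ∧ Q' f = 0 ∧ B e f = 1 := by
  obtain ⟨e, he0, hQe⟩ := exists_singular h2 halt hnd hQ' hdim
  obtain ⟨f', hf'⟩ : ∃ f', B e f' ≠ 0 := by
    by_contra hcon
    push_neg at hcon
    exact he0 (hnd e hcon)
  set f0 : V := (B e f')⁻¹ • f' with hf0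
  have hef0 : B e f0 = 1 := by
    rw [hf0, map_smul, smul_eq_mul]
    field_simp
  clear_value f0
  refine ⟨e, f0 + Q' f0 • e, hQe, ?_, ?_⟩
  · rw [hQ' f0 (Q' f0 • e), QuadraticMap.map_smul, smul_eq_mul, hQe, map_smul, smul_eq_mul]
    rw [bsymm h2 halt f0 e, hef0]
    linear_combination (Q' f0) * h2
  · rw [map_add, map_smul, smul_eq_mul, hef0, halt e]
    ring

end Assemble


section UB

variable {B : LinearMap.BilinForm F V}

lemma upper_bound [Fintype F] [FiniteDimensional F V] (h2 : (2 : F) = 0)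
    (halt : ∀ x : V, B x x = 0) (hnd : ∀ x : V, (∀ y : V, B x y = 0) → x = 0)
    {Q : QuadraticForm F V} (hQpol : ∀ x y : V, Q (x + y) = Q x + Q y + B x y)
    {d : ℕ} (hdim : Module.finrank F V = d) (hd6 : 6 ≤ d) :
    ∃ s : Finset (QuadraticForm F V), s.card = d ∧
      (∀ Q' ∈ s, ∃ g : V ≃ₗ[F] V,
        (∀ x y : V, B (g x) (g y) = B x y) ∧ Q' = Q.comp g.toLinearMap) ∧
      (∀ g : V ≃ₗ[F] V, (∀ x y : V, B (g x) (g y) = B x y) →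
        (∀ Q' ∈ s, Q'.comp g.toLinearMap = Q') → g = LinearEquiv.refl F V) := by
  classical
  obtain ⟨e, f, hQe, hQf, hef⟩ := exists_hyperbolic h2 halt hnd hQpol (by omega)
  set U1 : Submodule F V := LinearMap.ker ((B e).prod (B f)) with hU1
  have hU1nd : ∀ z ∈ U1, (∀ t ∈ U1, B z t = 0) → z = 0 :=
    perp_pair_nondeg h2 halt hnd e f hef
  have hU1dim : 4 ≤ Module.finrank F U1 := by
    have h5 := finrank_ker_prod_ge (B e) (B f)
    rw [← hU1] at h5
    omega
  obtain ⟨v, hvU1, hv0, hQv⟩ := exists_singular_sub h2 halt hQpol U1 hU1nd hU1dim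
  have hev : B e v = 0 := (mem_ker_prod.mp hvU1).1
  have hfv : B f v = 0 := (mem_ker_prod.mp hvU1).2
  have hve : B v e = 0 := by rw [bsymm h2 halt]; exact hev
  have hvf : B v f = 0 := by rw [bsymm h2 halt]; exact hfv
  set H : Submodule F V := LinearMap.ker (B v) with hH
  have hmemH : ∀ z : V, z ∈ H ↔ B v z = 0 := fun z => LinearMap.mem_ker
  obtain ⟨u, hu⟩ : ∃ u, B v u ≠ 0 := by
    by_contra hcon
    push_neg at hcon
    exact hv0 (hnd v hcon)
  have hHrank : Module.finrank F H + 1 = d := by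
    have h5 := finrank_ker_functional (B v) u hu
    rw [← hH, hdim] at h5
    exact h5
  set SingS : Set V := {w : V | B v w = 0 ∧ Q w = 0} with hSingS
  have heS : e ∈ SingS := ⟨hve, hQe⟩
  have hfS : f ∈ SingS := ⟨hvf, hQf⟩
  have hspan : Submodule.span F SingS = H := by
    apply le_antisymm
    · rw [Submodule.span_le]
      intro w hw
      exact (hmemH w).mpr hw.1
    · intro h hh
      rw [hmemH] at hh
      set zh : V := h + B h f • e + B h e • f with hzh
      have hBezh : B e zh = 0 := by
        rw [hzh]
        simp only [map_add, map_smul, smul_eq_mul, LinearMap.add_apply, LinearMap.smul_apply]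
        rw [halt e, hef, bsymm h2 halt e h]
        linear_combination (B h e) * h2
      have hBfzh : B f zh = 0 := by
        rw [hzh]
        simp only [map_add, map_smul, smul_eq_mul, LinearMap.add_apply, LinearMap.smul_apply]
        rw [halt f, bsymm h2 halt f e, hef, bsymm h2 halt f h]
        linear_combination (B h f) * h2
      have hBvzh : B v zh = 0 := by
        rw [hzh]
        simp only [map_add, map_smul, smul_eq_mul, LinearMap.add_apply, LinearMap.smul_apply]
        rw [hve, hvf, hh]
        ring
      have hzhe : B zh e = 0 := by rw [bsymm h2 halt]; exact hBezh
      have hzhf : B zh f = 0 := by rw [bsymm h2 halt]; exact hBfzh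
      set sh : V := zh + Q zh • e + f with hsh
      have hshS : sh ∈ SingS := by
        constructor
        · show B v sh = 0
          rw [hsh]
          simp only [map_add, map_smul, smul_eq_mul, LinearMap.add_apply, LinearMap.smul_apply]
          rw [hve, hvf, hBvzh]
          ring
        · show Q sh = 0
          have hcalc : Q sh = Q zh + Q zh := by
            rw [hsh, hQpol (zh + Q zh • e) f, hQpol zh (Q zh • e), QuadraticMap.map_smul,
              smul_eq_mul, hQe, hQf]
            simp only [map_add, map_smul, LinearMap.add_apply, LinearMap.smul_apply,
              smul_eq_mul]
            rw [hzhe, hzhf, hef]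
            ring
          rw [hcalc]
          exact addself h2 _
      have hcomb : sh + (Q zh + B h f) • e + ((1 : F) + B h e) • f
          = h + ((Q zh + B h f) + (Q zh + B h f)) • e
            + (((1 : F) + B h e) + ((1 : F) + B h e)) • f := by
        rw [hsh, hzh]
        module
      have hfin : h = sh + (Q zh + B h f) • e + ((1 : F) + B h e) • f := by
        rw [hcomb, addself h2 (Q zh + B h f), addself h2 ((1 : F) + B h e), zero_smul,
          zero_smul, add_zero, add_zero]
      rw [hfin]
      exact Submodule.add_mem _
        (Submodule.add_mem _ (Submodule.subset_span hshS)
          (Submodule.smul_mem _ _ (Submodule.subset_span heS)))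
        (Submodule.smul_mem _ _ (Submodule.subset_span hfS))
  obtain ⟨bS, hbsub, hbspan, hbind⟩ := exists_linearIndependent F SingS
  haveI : Fintype ↥bS := (hbind.setFinite).fintype
  have hbcard : bS.toFinset.card = d - 1 := by
    have h5 := finrank_span_set_eq_card hbind
    rw [hbspan, hspan] at h5
    omega
  have hb0 : (0 : V) ∉ bS := by
    intro h0
    exact hbind.ne_zero ⟨0, h0⟩ rfl
  set sForms : Finset (QuadraticForm F V) :=
    insert Q (bS.toFinset.image (fun w => Q + theta B w)) with hsF
  have hQnotin : Q ∉ bS.toFinset.image (fun w => Q + theta B w) := by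
    intro hmem
    obtain ⟨w, hwb, hweq⟩ := Finset.mem_image.mp hmem
    have : theta B w = theta B 0 := by
      rw [theta_zero]
      have h' := hweq.symm
      rwa [left_eq_add] at h'
    have hw0 : w = 0 := theta_inj h2 halt hnd this
    rw [hw0] at hwb
    exact hb0 (Set.mem_toFinset.mp hwb)
  have hinj : Set.InjOn (fun w => Q + theta B w) bS.toFinset := by
    intro w1 _ w2 _ heq
    exact theta_inj h2 halt hnd (add_left_cancel heq)
  have hcard : sForms.card = d := by
    rw [hsF, Finset.card_insert_of_notMem hQnotin, Finset.card_image_of_injOn hinj, hbcard]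
    omega
  refine ⟨sForms, hcard, ?_, ?_⟩
  · intro Q' hQ'
    rw [hsF, Finset.mem_insert] at hQ'
    rcases hQ' with rfl | hQ'
    · exact ⟨LinearEquiv.refl F V, fun x y => rfl, (comp_refl Q').symm⟩
    · obtain ⟨w, hwb, rfl⟩ := Finset.mem_image.mp hQ'
      have hwS : w ∈ SingS := hbsub (Set.mem_toFinset.mp hwb)
      have hQw : Q w = 0 := hwS.2
      refine ⟨involEquiv (tvL B w 1) (tvL_invol h2 halt w 1), ?_, ?_⟩
      · intro x y
        exact tvL_symp h2 halt w 1 x y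
      · have hcomp := tvL_comp h2 hQpol w 1
        rw [hQw] at hcomp
        have hscal : (1 : F) * 1 * 0 + 1 = 1 := by ring
        rw [hscal, one_smul] at hcomp
        exact hcomp.symm
  · intro g hg hfix
    have hQfix : Q.comp g.toLinearMap = Q := hfix Q (Finset.mem_insert_self _ _)
    have hwfix : ∀ w ∈ bS, g w = w := by
      intro w hw
      have hmem : (Q + theta B w) ∈ sForms :=
        Finset.mem_insert_of_mem (Finset.mem_image_of_mem _ (Set.mem_toFinset.mpr hw))
      have hcomp := hfix _ hmem
      rw [comp_add', hQfix, theta_comp g hg w] at hcomp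
      have hth : theta B (g.symm w) = theta B w := add_left_cancel hcomp
      have hsw := theta_inj h2 halt hnd hth
      calc g w = g (g.symm w) := by rw [hsw]
        _ = w := g.apply_symm_apply w
    have hfixH : ∀ x ∈ H, g x = x := by
      intro x hx
      have hxspan : x ∈ Submodule.span F bS := by
        rw [hbspan, hspan]
        exact hx
      have hle : Submodule.span F bS ≤ LinearMap.ker (g.toLinearMap - LinearMap.id) := by
        rw [Submodule.span_le]
        intro w hw
        rw [SetLike.mem_coe, LinearMap.mem_ker, LinearMap.sub_apply, LinearMap.id_apply,
          sub_eq_zero]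
        exact hwfix w hw
      have := hle hxspan
      rw [LinearMap.mem_ker, LinearMap.sub_apply, LinearMap.id_apply, sub_eq_zero] at this
      exact this
    obtain ⟨c, hc⟩ := fix_perp_transvection h2 halt hnd v hv0 g hg
      (fun x hx => hfixH x ((hmemH x).mpr (by rw [bsymm h2 halt v x]; exact hx)))
    have hgt : g.toLinearMap = tvL B v c := by
      apply LinearMap.ext
      intro y
      rw [tvL_apply]
      exact hc y
    have hQc : Q = Q + c • theta B v := by
      conv_lhs => rw [← hQfix]
      rw [hgt, tvL_comp h2 hQpol v c, hQv]
      have hscal : c * c * 0 + c = c := by ring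
      rw [hscal]
    have hcz : c • theta B v = 0 := ((left_eq_add).mp hQc)
    have hc0 : c = 0 := by
      by_contra hcne
      have hz := QuadraticMap.congr_fun hcz u
      rw [QuadraticMap.smul_apply, theta_apply, QuadraticMap.zero_apply, smul_eq_mul] at hz
      have huv : B u v ≠ 0 := by
        rw [bsymm h2 halt u v]
        exact hu
      exact (mul_ne_zero hcne (mul_ne_zero huv huv)) hz
    apply LinearEquiv.ext
    intro y
    rw [hc y, hc0]
    simp

end UB


section LB

variable {B : LinearMap.BilinForm F V}

lemma lower_bound [Fintype F] [FiniteDimensional F V] (h2 : (2 : F) = 0)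
    (halt : ∀ x : V, B x x = 0) (hnd : ∀ x : V, (∀ y : V, B x y = 0) → x = 0)
    {Q : QuadraticForm F V} (hQpol : ∀ x y : V, Q (x + y) = Q x + Q y + B x y)
    {d : ℕ} (hdim : Module.finrank F V = d) (hd6 : 6 ≤ d)
    (s : Finset (QuadraticForm F V))
    (hmem : ∀ Q' ∈ s, ∃ g : V ≃ₗ[F] V,
      (∀ x y : V, B (g x) (g y) = B x y) ∧ Q' = Q.comp g.toLinearMap)
    (hstab : ∀ g : V ≃ₗ[F] V, (∀ x y : V, B (g x) (g y) = B x y) →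
      (∀ Q' ∈ s, Q'.comp g.toLinearMap = Q') → g = LinearEquiv.refl F V) :
    d ≤ s.card := by
  classical
  by_contra hlt
  push_neg at hlt
  rcases Finset.eq_empty_or_nonempty s with rfl | ⟨Q0, hQ0⟩
  · haveI : Nontrivial V := Module.nontrivial_of_finrank_pos (R := F) (by omega)
    obtain ⟨x0, hx0⟩ := exists_ne (0 : V)
    set g := involEquiv (tvL B x0 1) (tvL_invol h2 halt x0 1) with hg
    have hgrefl := hstab g (fun x y => tvL_symp h2 halt x0 1 x y)
      (by intro Q' hQ'; simp at hQ')
    obtain ⟨yy, hyy⟩ : ∃ yy, B yy x0 ≠ 0 := by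
      by_contra hcon
      push_neg at hcon
      apply hx0
      apply hnd
      intro y
      rw [bsymm h2 halt]
      exact hcon y
    have hgyy : g yy = yy := by rw [hgrefl]; rfl
    have hyy2 : tvL B x0 1 yy = yy := hgyy
    rw [tvL_apply] at hyy2
    have hz := (add_eq_left).mp hyy2
    rcases smul_eq_zero.mp hz with h' | h'
    · rw [one_mul] at h'
      exact hyy h'
    · exact hx0 h'
  · have hrep : ∀ Q' : {x // x ∈ s}, ∃ u : V, (Q' : QuadraticForm F V) = Q + theta B u := by
      intro Q'
      obtain ⟨g, hgs, hgq⟩ := hmem Q' Q'.2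
      obtain ⟨w, hw⟩ := exists_theta_rep h2 halt hnd hQpol g.toLinearMap
        (fun x y => by simpa using hgs x y)
      exact ⟨w, by rw [hgq, hw]⟩
    choose wfun hwfun using hrep
    have hwfun' : ∀ (Q' : QuadraticForm F V) (hQ' : Q' ∈ s),
        Q' = Q + theta B (wfun ⟨Q', hQ'⟩) := fun Q' hQ' => hwfun ⟨Q', hQ'⟩
    set w0 : V := wfun ⟨Q0, hQ0⟩ with hw0
    set s' := s.erase Q0 with hs'
    set uf : {x // x ∈ s'} → V :=
      fun i => wfun ⟨(i : QuadraticForm F V), Finset.mem_of_mem_erase i.2⟩ - w0 with huf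
    set Φ : V →ₗ[F] ({x // x ∈ s'} → F) := LinearMap.pi (fun i => B (uf i)) with hΦ
    set W : Submodule F V := LinearMap.ker Φ with hWdef
    have hmemW : ∀ x : V, x ∈ W ↔ ∀ i : {x // x ∈ s'}, B (uf i) x = 0 := by
      intro x
      rw [hWdef, LinearMap.mem_ker, hΦ]
      constructor
      · intro h i
        have := congrFun h i
        simpa [LinearMap.pi_apply] using this
      · intro h
        funext i
        simp [LinearMap.pi_apply, h i]
    have hWrank : 2 ≤ Module.finrank F W := by
      have h5 := finrank_ker_ge Φ
      rw [← hWdef] at h5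
      have hcards' : Fintype.card {x // x ∈ s'} = s'.card := Fintype.card_coe _
      have hcs' : s'.card = s.card - 1 := by rw [hs']; exact Finset.card_erase_of_mem hQ0
      have hpos : 0 < s.card := Finset.card_pos.mpr ⟨Q0, hQ0⟩
      rw [hdim] at h5
      omega
    have hWB : ∀ x ∈ W, ∀ (Q' : QuadraticForm F V) (hQ' : Q' ∈ s),
        B (wfun ⟨Q', hQ'⟩ - w0) x = 0 := by
      intro x hx Q' hQ'
      by_cases hQQ0 : Q' = Q0
      · subst hQQ0
        have heq0 : wfun ⟨Q', hQ'⟩ = w0 := rfl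
        rw [heq0, sub_self]
        simp
      · have hmem' : Q' ∈ s' := Finset.mem_erase.mpr ⟨hQQ0, hQ'⟩
        exact (hmemW x).mp hx ⟨Q', hmem'⟩
    have hQ0rep : Q0 = Q + theta B w0 := hwfun' Q0 hQ0
    have hQ0pol : ∀ x y : V, Q0 (x + y) = Q0 x + Q0 y + B x y := by
      intro x y
      rw [hQ0rep, QuadraticMap.add_apply, QuadraticMap.add_apply, QuadraticMap.add_apply,
        hQpol]
      have hth : theta B w0 (x + y) = theta B w0 x + theta B w0 y := by
        simp only [theta_apply, map_add, LinearMap.add_apply]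
        linear_combination (B x w0 * B y w0) * h2
      rw [hth]
      ring
    have hrel : ∀ (Q' : QuadraticForm F V) (hQ' : Q' ∈ s),
        Q' = Q0 + theta B (wfun ⟨Q', hQ'⟩ - w0) := by
      intro Q' hQ'
      rw [hQ0rep, add_assoc, ← theta_add h2]
      have habel : w0 + (wfun ⟨Q', hQ'⟩ - w0) = wfun ⟨Q', hQ'⟩ := by abel
      rw [habel]
      exact hwfun' Q' hQ'
    by_cases hcase : ∀ x ∈ W, Q0 x = 0
    · obtain ⟨v1, v2, hv1W, hv2W, hv10, hpair⟩ := exists_indep_pair W hWrank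
      have hQ01 : Q0 v1 = 0 := hcase v1 hv1W
      have hQ02 : Q0 v2 = 0 := hcase v2 hv2W
      have hB12 : B v1 v2 = 0 := by
        have h12 := hQ0pol v1 v2
        rw [hcase (v1 + v2) (W.add_mem hv1W hv2W), hQ01, hQ02] at h12
        linear_combination -h12
      set g := involEquiv (sgL B v1 v2) (sgL_invol h2 halt v1 v2 hB12) with hg
      have hgs : ∀ x y, B (g x) (g y) = B x y := fun x y => sgL_symp h2 halt v1 v2 hB12 x y
      have hgfix : ∀ Q' ∈ s, Q'.comp g.toLinearMap = Q' := by
        intro Q' hQ'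
        conv_lhs => rw [hrel Q' hQ']
        rw [comp_add', theta_comp g hgs]
        have hsym : g.symm (wfun ⟨Q', hQ'⟩ - w0) = wfun ⟨Q', hQ'⟩ - w0 := by
          show sgL B v1 v2 _ = _
          rw [sgL_apply, hWB v1 hv1W Q' hQ', hWB v2 hv2W Q' hQ', zero_smul, zero_smul,
            add_zero, add_zero]
        rw [hsym,
          show g.toLinearMap = sgL B v1 v2 from rfl,
          sgL_fix h2 halt hQ0pol v1 v2 hQ01 hQ02 hB12]
        exact (hrel Q' hQ').symm
      have hgrefl := hstab g hgs hgfix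
      obtain ⟨yy, hyy⟩ : ∃ yy, B yy v1 ≠ 0 := by
        by_contra hcon
        push_neg at hcon
        apply hv10
        apply hnd
        intro y
        rw [bsymm h2 halt]
        exact hcon y
      have hgyy : g yy = yy := by rw [hgrefl]; rfl
      have hyy2 : sgL B v1 v2 yy = yy := hgyy
      rw [sgL_apply, add_assoc] at hyy2
      have hz := (add_eq_left).mp hyy2
      have hfin : v2 + ((B yy v1)⁻¹ * B yy v2) • v1 = 0 := by
        have hsc := congrArg (fun z => (B yy v1)⁻¹ • z) hz
        simp only [smul_add, smul_smul, smul_zero] at hsc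
        rw [inv_mul_cancel₀ hyy, one_smul] at hsc
        exact hsc
      exact hpair _ hfin
    · push_neg at hcase
      obtain ⟨x1, hx1W, hQx1⟩ := hcase
      set c := (Q0 x1)⁻¹ with hcdef
      set g := involEquiv (tvL B x1 c) (tvL_invol h2 halt x1 c) with hg
      have hgs : ∀ x y, B (g x) (g y) = B x y := fun x y => tvL_symp h2 halt x1 c x y
      have hgfix : ∀ Q' ∈ s, Q'.comp g.toLinearMap = Q' := by
        intro Q' hQ'
        conv_lhs => rw [hrel Q' hQ']
        rw [comp_add', theta_comp g hgs]
        have hsym : g.symm (wfun ⟨Q', hQ'⟩ - w0) = wfun ⟨Q', hQ'⟩ - w0 := by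
          show tvL B x1 c _ = _
          rw [tvL_apply, hWB x1 hx1W Q' hQ', mul_zero, zero_smul, add_zero]
        rw [hsym,
          show g.toLinearMap = tvL B x1 c from rfl,
          tvL_comp h2 hQ0pol x1 c]
        have hscal : c * c * Q0 x1 + c = 0 := by
          have hcc : c * c * Q0 x1 = c := by
            rw [hcdef]
            field_simp
          rw [hcc]
          exact addself h2 c
        rw [hscal, zero_smul, add_zero]
        exact (hrel Q' hQ').symm
      have hgrefl := hstab g hgs hgfix
      obtain ⟨yy, hyy⟩ : ∃ yy, B yy x1 ≠ 0 := by
        by_contra hcon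
        push_neg at hcon
        have hx10 : x1 ≠ 0 := by
          intro h0
          rw [h0, QuadraticMap.map_zero] at hQx1
          exact hQx1 rfl
        apply hx10
        apply hnd
        intro y
        rw [bsymm h2 halt]
        exact hcon y
      have hgyy : g yy = yy := by rw [hgrefl]; rfl
      have hyy2 : tvL B x1 c yy = yy := hgyy
      rw [tvL_apply] at hyy2
      have hz := (add_eq_left).mp hyy2
      rcases smul_eq_zero.mp hz with h' | h'
      · have hcne : c ≠ 0 := inv_ne_zero hQx1
        exact (mul_ne_zero hcne hyy) h'
      · exact hyy (by rw [h', map_zero])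

end LB

end SpBaseAux


/-- For `q = 2^f` even and `d = 2m ≥ 6`, the base size of `Sp_d(q)` acting on the
coset space of `GO^±_d(q)` equals `d`. The coset space `GO^ε_d(q) \\ Sp_d(q)` is
identified, as an `Sp_d(q)`-set, with the orbit of the quadratic form `Q`
(whose polar form is the symplectic form `B`) under the symplectic group:
cosets correspond to the forms `Q ∘ g` for `g ∈ Sp_d(q)`. A base is a finite set
of points of this orbit with trivial pointwise stabilizer, and `d` is the least
size of a base. -/
theorem stmt8 {F V : Type*} [Field F] [Fintype F] [AddCommGroup V] [Module F V]
    (f q d m : ℕ) (hq : Fintype.card F = q) (hqf : q = 2 ^ f) (hf : 1 ≤ f)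
    (hd : d = 2 * m) (hd6 : 6 ≤ d) (hdim : Module.finrank F V = d)
    (B : LinearMap.BilinForm F V) (halt : ∀ x : V, B x x = 0)
    (hndB : ∀ x : V, (∀ y : V, B x y = 0) → x = 0)
    (Q : QuadraticForm F V) (hpol : QuadraticMap.polarBilin Q = B) :
    IsLeast {n : ℕ | ∃ s : Finset (QuadraticForm F V), s.card = n ∧
      (∀ Q' ∈ s, ∃ g : V ≃ₗ[F] V,
        (∀ x y : V, B (g x) (g y) = B x y) ∧ Q' = Q.comp g.toLinearMap) ∧
      (∀ g : V ≃ₗ[F] V, (∀ x y : V, B (g x) (g y) = B x y) →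
        (∀ Q' ∈ s, Q'.comp g.toLinearMap = Q') → g = LinearEquiv.refl F V)} d := by
  classical
  have h2 : (2 : F) = 0 := SpBaseAux.char_two_of_card f (hq.trans hqf) hf
  have hFD : FiniteDimensional F V := FiniteDimensional.of_finrank_pos (by rw [hdim]; omega)
  have hQpol : ∀ x y : V, Q (x + y) = Q x + Q y + B x y :=
    SpBaseAux.polB_of_polarBilin hpol
  constructor
  · obtain ⟨s, hcard, hmem, hstab⟩ := SpBaseAux.upper_bound h2 halt hndB hQpol hdim hd6
    exact ⟨s, hcard, hmem, hstab⟩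
  · rintro n ⟨s, hcard, hmem, hstab⟩
    have hge := SpBaseAux.lower_bound h2 halt hndB hQpol hdim hd6 s hmem hstab
    omega
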